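/- Let a <= c <= d <= b be real numbers and y0 a real number. Let l : R -> R be continuous on [a,b], antitone (nonincreasing) on [a,c], equal to y0 at every point of [c,d], and monotone (nondecreasing) on [d,b]. Let u : R -> R satisfy l x <= u x for all x in [a,b], and let S = { (x,y) in R^2 : a <= x <= b and l x <= y <= u x }. Then for every point p = (px,py) in S and every qx in [c,d], setting q = (qx, y0), one has d_S(p,q) = ||p - q||_1. -/

import Mathlib

open Set
set_option maxHeartbeats 1000000

noncomputable section

/-- A path in `S` from `p` to `q`: continuous on `[0,1]`, with the prescribed endpoints,
and staying in `S` on `[0,1]`. The plane carries the `L1` metric via `WithLp 1 (ℝ × ℝ)`. -/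
def IsPathIn (S : Set (WithLp 1 (ℝ × ℝ))) (p q : WithLp 1 (ℝ × ℝ))
    (g : ℝ → WithLp 1 (ℝ × ℝ)) : Prop :=
  ContinuousOn g (Icc 0 1) ∧ g 0 = p ∧ g 1 = q ∧ ∀ x ∈ Icc (0:ℝ) 1, g x ∈ S

/-- The intrinsic `L1` distance in `S`: the infimum of the `L1` lengths (total variations)
of all paths in `S` from `p` to `q` (infinity if there is no such path). -/
def dS (S : Set (WithLp 1 (ℝ × ℝ))) (p q : WithLp 1 (ℝ × ℝ)) : ENNReal :=
  ⨅ (g : ℝ → WithLp 1 (ℝ × ℝ)) (_ : IsPathIn S p q g), eVariationOn g (Icc 0 1)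

lemma edist_l1 (x y : WithLp 1 (ℝ × ℝ)) :
    edist x y = edist x.ofLp.1 y.ofLp.1 + edist x.ofLp.2 y.ofLp.2 := by
  rw [WithLp.prod_edist_eq_add (by norm_num)]
  norm_num

lemma evar_le_add (g : ℝ → WithLp 1 (ℝ × ℝ)) (s : Set ℝ) :
    eVariationOn g s ≤
      eVariationOn (fun t => (g t).ofLp.1) s + eVariationOn (fun t => (g t).ofLp.2) s := by
  apply iSup_le
  rintro ⟨n, ⟨u, hu, us⟩⟩
  have : ∑ i ∈ Finset.range n, edist (g (u (i + 1))) (g (u i)) =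
      (∑ i ∈ Finset.range n, edist (g (u (i + 1))).ofLp.1 (g (u i)).ofLp.1) +
      ∑ i ∈ Finset.range n, edist (g (u (i + 1))).ofLp.2 (g (u i)).ofLp.2 := by
    rw [← Finset.sum_add_distrib]
    exact Finset.sum_congr rfl fun i _ => edist_l1 _ _
  rw [this]
  exact add_le_add (eVariationOn.sum_le (n := n) hu us) (eVariationOn.sum_le (n := n) hu us)

lemma evar_neg (f : ℝ → ℝ) (s : Set ℝ) :
    eVariationOn (fun x => -f x) s = eVariationOn f s := by
  unfold eVariationOn
  congr 1
  ext p
  exact Finset.sum_congr rfl fun i _ => edist_neg_neg _ _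

lemma AntitoneOn.eVariationOn_le' {f : ℝ → ℝ} {s : Set ℝ} (hf : AntitoneOn f s) {a b : ℝ}
    (as : a ∈ s) (bs : b ∈ s) : eVariationOn f (s ∩ Icc a b) ≤ ENNReal.ofReal (f a - f b) := by
  have := (hf.neg).eVariationOn_le as bs
  rw [evar_neg] at this
  convert this using 2
  ring

theorem mountain_canonical_path_shortest (a b c d y0 : ℝ)
    (hac : a ≤ c) (hcd : c ≤ d) (hdb : d ≤ b)
    (l u : ℝ → ℝ) (hlcont : ContinuousOn l (Icc a b))
    (hldec : AntitoneOn l (Icc a c)) (hlbase : ∀ x ∈ Icc c d, l x = y0)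
    (hlinc : MonotoneOn l (Icc d b)) (hlu : ∀ x ∈ Icc a b, l x ≤ u x)
    (S : Set (WithLp 1 (ℝ × ℝ)))
    (hS : S = {p : WithLp 1 (ℝ × ℝ) | a ≤ p.ofLp.1 ∧ p.ofLp.1 ≤ b ∧ l p.ofLp.1 ≤ p.ofLp.2 ∧ p.ofLp.2 ≤ u p.ofLp.1})
    (p : WithLp 1 (ℝ × ℝ)) (hp : p ∈ S) (qx : ℝ) (hqx : qx ∈ Icc c d) :
    dS S p ((WithLp.equiv 1 (ℝ × ℝ)).symm (qx, y0)) =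
      (‖p - (WithLp.equiv 1 (ℝ × ℝ)).symm (qx, y0)‖₊ : ENNReal) := by
  set q : WithLp 1 (ℝ × ℝ) := (WithLp.equiv 1 (ℝ × ℝ)).symm (qx, y0) with hqdef
  obtain ⟨hc, hd⟩ := hqx
  rw [hS] at hp
  obtain ⟨hpa, hpb, hpl, hpu⟩ := hp
  -- basic facts about l
  have hld : l d = y0 := hlbase d ⟨hcd, le_refl d⟩
  have h2const : AntitoneOn l (Icc c d) := fun s hs t ht _ => by
    rw [hlbase s hs, hlbase t ht]
  have h2const' : MonotoneOn l (Icc c d) := fun s hs t ht _ => by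
    rw [hlbase s hs, hlbase t ht]
  have hl_ad : AntitoneOn l (Icc a d) := by
    have := hldec.union_right h2const (isGreatest_Icc hac) (isLeast_Icc hcd)
    rwa [Icc_union_Icc_eq_Icc hac hcd] at this
  have hl_cb : MonotoneOn l (Icc c b) := by
    have := h2const'.union_right hlinc (isGreatest_Icc hcd) (isLeast_Icc hdb)
    rwa [Icc_union_Icc_eq_Icc hcd hdb] at this
  have hy0 : y0 ≤ p.ofLp.2 := by
    rcases le_total p.ofLp.1 d with h | h
    · have : l d ≤ l p.ofLp.1 :=
        hl_ad ⟨hpa, h⟩ ⟨hac.trans hcd, le_refl d⟩ h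
      linarith
    · have : l d ≤ l p.ofLp.1 := hlinc ⟨le_refl d, hdb⟩ ⟨h, hpb⟩ h
      linarith
  -- the canonical path
  set σ : ℝ → ℝ := fun t => min (2*t) 1 with hσdef
  set τ : ℝ → ℝ := fun t => max (2*t - 1) 0 with hτdef
  set x : ℝ → ℝ := fun t => p.ofLp.1 + τ t * (qx - p.ofLp.1) with hxdef
  set y : ℝ → ℝ := fun t => p.ofLp.2 + σ t * (l p.ofLp.1 - p.ofLp.2) + (l (x t) - l p.ofLp.1) with hydef
  set g : ℝ → WithLp 1 (ℝ × ℝ) := fun t => (WithLp.equiv 1 (ℝ × ℝ)).symm (x t, y t) with hgdef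
  have hτ01 : ∀ t ∈ Icc (0:ℝ) 1, 0 ≤ τ t ∧ τ t ≤ 1 := fun t ht =>
    ⟨le_max_right _ _, max_le (by linarith [ht.2]) one_pos.le⟩
  have hσ01 : ∀ t ∈ Icc (0:ℝ) 1, 0 ≤ σ t ∧ σ t ≤ 1 := fun t ht =>
    ⟨le_min (by linarith [ht.1]) one_pos.le, min_le_right _ _⟩
  have hxseg : ∀ t ∈ Icc (0:ℝ) 1, min p.ofLp.1 qx ≤ x t ∧ x t ≤ max p.ofLp.1 qx := by
    intro t ht
    obtain ⟨h0, h1⟩ := hτ01 t ht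
    constructor <;> rcases le_total p.ofLp.1 qx with h | h
    · exact min_le_of_left_le (by simp only [hxdef]; nlinarith)
    · exact min_le_of_right_le (by simp only [hxdef]; nlinarith)
    · exact le_max_of_le_right (by simp only [hxdef]; nlinarith)
    · exact le_max_of_le_left (by simp only [hxdef]; nlinarith)
  have hxab : ∀ t ∈ Icc (0:ℝ) 1, x t ∈ Icc a b := by
    intro t ht
    obtain ⟨h0, h1⟩ := hxseg t ht
    constructor
    · exact le_trans (le_min hpa (hac.trans hc)) h0
    · exact le_trans h1 (max_le hpb (hd.trans hdb))
  have hx_half : ∀ t, t ≤ 1/2 → x t = p.ofLp.1 := by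
    intro t h
    have : τ t = 0 := max_eq_right (by linarith)
    simp [hxdef, this]
  have hσ_half : ∀ t, 1/2 ≤ t → σ t = 1 := fun t h => min_eq_right (by linarith)
  have hy_fst : ∀ t, t ≤ 1/2 → y t = p.ofLp.2 + σ t * (l p.ofLp.1 - p.ofLp.2) := by
    intro t h
    simp [hydef, hx_half t h]
  have hy_snd : ∀ t, 1/2 ≤ t → y t = l (x t) := by
    intro t h
    rw [hydef]
    simp only [hσ_half t h]
    ring
  have hx0 : x 0 = p.ofLp.1 := hx_half 0 (by norm_num)
  have hx1 : x 1 = qx := by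
    have : τ 1 = 1 := by norm_num [hτdef]
    simp [hxdef, this]
  have hy0' : y 0 = p.ofLp.2 := by
    have h : σ 0 = 0 := by norm_num [hσdef]
    rw [hy_fst 0 (by norm_num), h]; ring
  have hy1 : y 1 = y0 := by
    rw [hy_snd 1 (by norm_num), hx1, hlbase qx ⟨hc, hd⟩]
  -- continuity
  have hτc : Continuous τ := ((continuous_const.mul continuous_id).sub continuous_const).max
    continuous_const
  have hσc : Continuous σ := (continuous_const.mul continuous_id).min continuous_const
  have hxc : Continuous x := continuous_const.add (hτc.mul continuous_const)
  have hlxc : ContinuousOn (fun t => l (x t)) (Icc 0 1) :=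
    hlcont.comp hxc.continuousOn hxab
  have hyc : ContinuousOn y (Icc 0 1) :=
    ((continuous_const.add (hσc.mul continuous_const)).continuousOn).add
      (hlxc.sub continuousOn_const)
  have hgc : ContinuousOn g (Icc 0 1) :=
    (WithLp.prod_continuous_toLp _ _ _).comp_continuousOn
      (hxc.continuousOn.prodMk hyc)
  -- membership
  have hmem : ∀ t ∈ Icc (0:ℝ) 1, g t ∈ S := by
    intro t ht
    rw [hS]
    refine ⟨(hxab t ht).1, (hxab t ht).2, ?_, ?_⟩
    · show l (x t) ≤ y t
      rcases le_total t (1/2) with h | h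
      · rw [hy_fst t h, hx_half t h]
        obtain ⟨h0, h1⟩ := hσ01 t ht
        nlinarith
      · rw [hy_snd t h]
    · show y t ≤ u (x t)
      rcases le_total t (1/2) with h | h
      · rw [hy_fst t h, hx_half t h]
        obtain ⟨h0, h1⟩ := hσ01 t ht
        nlinarith
      · rw [hy_snd t h]
        exact hlu _ (hxab t ht)
  have hg0 : g 0 = p := by
    rw [hgdef]; simp only [hx0, hy0']; rfl
  have hg1 : g 1 = q := by
    rw [hgdef]; simp only [hx1, hy1]; rfl
  have hpath : IsPathIn S p q g := ⟨hgc, hg0, hg1, hmem⟩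
  -- antitonicity of y on [0,1]
  have hy_anti_fst : AntitoneOn y (Icc 0 (1/2)) := by
    intro s hs t ht hst
    rw [hy_fst s hs.2, hy_fst t ht.2]
    have hσst : σ s ≤ σ t := min_le_min (by linarith) le_rfl
    obtain ⟨h0, _⟩ := hσ01 s ⟨hs.1, by linarith [hs.2]⟩
    nlinarith
  have hy_anti_snd : AntitoneOn y (Icc (1/2) 1) := by
    intro s hs t ht hst
    rw [hy_snd s hs.1, hy_snd t ht.1]
    have hs' : s ∈ Icc (0:ℝ) 1 := ⟨by linarith [hs.1], hs.2⟩
    have ht' : t ∈ Icc (0:ℝ) 1 := ⟨by linarith [ht.1], ht.2⟩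
    rcases le_total p.ofLp.1 qx with hpq | hpq
    · -- x is monotone, l is antitone on [a,d]
      have hxst : x s ≤ x t := by
        have : τ s ≤ τ t := max_le_max (by linarith) le_rfl
        simp only [hxdef]
        nlinarith
      have hmemad : ∀ r ∈ Icc (0:ℝ) 1, x r ∈ Icc a d := by
        intro r hr
        obtain ⟨h0, h1⟩ := hxseg r hr
        exact ⟨le_trans (le_min hpa (hac.trans hc)) h0,
          le_trans h1 (max_le (hpq.trans hd) hd)⟩
      exact hl_ad (hmemad s hs') (hmemad t ht') hxst
    · -- x is antitone, l is monotone on [c,b]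
      have hxst : x t ≤ x s := by
        have : τ s ≤ τ t := max_le_max (by linarith) le_rfl
        simp only [hxdef]
        nlinarith
      have hmemcb : ∀ r ∈ Icc (0:ℝ) 1, x r ∈ Icc c b := by
        intro r hr
        obtain ⟨h0, h1⟩ := hxseg r hr
        exact ⟨le_trans (le_min (hc.trans hpq) hc) h0,
          le_trans h1 (max_le hpb (hd.trans hdb))⟩
      exact hl_cb (hmemcb t ht') (hmemcb s hs') hxst
  have hy_anti : AntitoneOn y (Icc 0 1) := by
    have := hy_anti_fst.union_right hy_anti_snd (isGreatest_Icc (by norm_num))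
      (isLeast_Icc (by norm_num))
    rwa [Icc_union_Icc_eq_Icc (by norm_num) (by norm_num)] at this
  -- variation bounds
  have hvy : eVariationOn y (Icc 0 1) ≤ ENNReal.ofReal (p.ofLp.2 - y0) := by
    have := hy_anti.eVariationOn_le' (left_mem_Icc.2 (by norm_num : (0:ℝ) ≤ 1))
      (right_mem_Icc.2 (by norm_num : (0:ℝ) ≤ 1))
    rwa [inter_self, hy0', hy1] at this
  have hvx : eVariationOn x (Icc 0 1) ≤ ENNReal.ofReal |p.ofLp.1 - qx| := by
    rcases le_total p.ofLp.1 qx with hpq | hpq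
    · have hxm : MonotoneOn x (Icc (0:ℝ) 1) := by
        intro s _ t _ hst
        have : τ s ≤ τ t := max_le_max (by linarith) le_rfl
        simp only [hxdef]
        nlinarith
      have := hxm.eVariationOn_le (left_mem_Icc.2 (by norm_num : (0:ℝ) ≤ 1))
        (right_mem_Icc.2 (by norm_num : (0:ℝ) ≤ 1))
      rw [inter_self, hx0, hx1] at this
      rwa [abs_of_nonpos (by linarith), neg_sub]
    · have hxm : AntitoneOn x (Icc (0:ℝ) 1) := by
        intro s _ t _ hst
        have : τ s ≤ τ t := max_le_max (by linarith) le_rfl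
        simp only [hxdef]
        nlinarith
      have := hxm.eVariationOn_le' (left_mem_Icc.2 (by norm_num : (0:ℝ) ≤ 1))
        (right_mem_Icc.2 (by norm_num : (0:ℝ) ≤ 1))
      rw [inter_self, hx0, hx1] at this
      rwa [abs_of_nonneg (by linarith)]
  -- the edist computation
  have hedist : edist p q = ENNReal.ofReal |p.ofLp.1 - qx| + ENNReal.ofReal (p.ofLp.2 - y0) := by
    rw [edist_l1]
    have h1 : edist p.ofLp.1 q.ofLp.1 = ENNReal.ofReal |p.ofLp.1 - qx| := by
      rw [show q.ofLp.1 = qx from rfl, edist_dist, Real.dist_eq]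
    have h2 : edist p.ofLp.2 q.ofLp.2 = ENNReal.ofReal (p.ofLp.2 - y0) := by
      rw [show q.ofLp.2 = y0 from rfl, edist_dist, Real.dist_eq, abs_of_nonneg (by linarith)]
    rw [h1, h2]
  have hrhs : (‖p - q‖₊ : ENNReal) = edist p q := by
    rw [edist_eq_enorm_sub, enorm_eq_nnnorm]
  rw [hrhs]
  apply le_antisymm
  · -- dS ≤ edist
    have h1 : dS S p q ≤ eVariationOn g (Icc 0 1) :=
      iInf_le_of_le g (iInf_le _ hpath)
    refine h1.trans ?_
    have h2 : eVariationOn g (Icc 0 1) ≤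
        eVariationOn (fun t => (g t).ofLp.1) (Icc 0 1) +
        eVariationOn (fun t => (g t).ofLp.2) (Icc 0 1) := evar_le_add g _
    have hfst : eVariationOn (fun t => (g t).ofLp.1) (Icc (0:ℝ) 1) = eVariationOn x (Icc 0 1) := rfl
    have hsnd : eVariationOn (fun t => (g t).ofLp.2) (Icc (0:ℝ) 1) = eVariationOn y (Icc 0 1) := rfl
    rw [hfst, hsnd] at h2
    rw [hedist]
    exact h2.trans (add_le_add hvx hvy)
  · -- edist ≤ dS
    refine le_iInf fun g' => le_iInf fun hg' => ?_
    have := eVariationOn.edist_le g' (left_mem_Icc.2 (by norm_num : (0:ℝ) ≤ 1))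
      (right_mem_Icc.2 (by norm_num : (0:ℝ) ≤ 1))
    rwa [hg'.2.1, hg'.2.2.1] at this
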